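/- arXiv:1506.03404 — 2 statements merged into one kernel-verified Lean document; each statement's English description precedes it below -/
import Mathlib

section
/- Let R be a supertropical semiring such that eR is a nontrivial semifield, and let (q,b) be a quadratic pair on an R-module V. Let x, y, w ∈ V be anisotropic (q(x) ≠ 0, q(y) ≠ 0, q(w) ≠ 0). Then x + y is anisotropic and CS(x+y, w) ≤ CS(x,w) + CS(y,w) in the totally ordered semifield eR. -/
open scoped Classical

namespace Supertrop

section Defs

variable (R : Type*) [CommSemiring R]

/-- The distinguished element `e = 1 + 1` of a semiring. -/
def eps : R := 1 + 1

/-- `R` is a supertropical semiring: `e` is additively idempotent, and the two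
supertropical addition axioms hold. -/
def IsSupertropical : Prop :=
  eps R + eps R = eps R ∧
    (∀ x y : R, eps R * x ≠ eps R * y → x + y = x ∨ x + y = y) ∧
    (∀ x y : R, eps R * x = eps R * y → x + y = eps R * y)

/-- The ghost ideal `eR`, as a subset of `R`. -/
def eSet : Set R := Set.range (fun a : R => eps R * a)

/-- The tangible elements `𝒯(R) = R \ eR`. -/
def tangible : Set R := {x : R | x ∉ eSet R}

/-- The nonzero ghost elements `𝒢(R) = eR \ {0}`. -/
def ghost : Set R := eSet R \ {0}

end Defs

section Orders

variable {R : Type*} [CommSemiring R]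

/-- The minimal ordering on an additive monoid: `x ≤ y` iff `∃ z, x + z = y`. -/
def mle {M : Type*} [AddCommMonoid M] (x y : M) : Prop := ∃ z, x + z = y

/-- Strict minimal ordering. -/
def mlt {M : Type*} [AddCommMonoid M] (x y : M) : Prop := mle x y ∧ x ≠ y

/-- The (total) ordering of the bipotent semiring `eR`: `u ≤ v ⟺ u + v = v`. -/
def gle (u v : R) : Prop := u + v = v

/-- The strict ordering of `eR`. -/
def glt (u v : R) : Prop := gle u v ∧ u ≠ v

end Orders

section SSF

variable (R : Type*) [CommSemiring R]

/-- `R` is a supersemifield: supertropical, every tangible element is invertible in `R`,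
and `𝒢(R)` is a group under multiplication with identity `e`. -/
def IsSupersemifield : Prop :=
  IsSupertropical R ∧
    (∀ t ∈ tangible R, IsUnit t) ∧
    eps R ∈ ghost R ∧
    (∀ g ∈ ghost R, ∀ h ∈ ghost R, g * h ∈ ghost R) ∧
    (∀ g ∈ ghost R, ∃ h ∈ ghost R, g * h = eps R)

/-- The supersemifield `R` is tangible: `e·𝒯(R) = 𝒢(R)`. -/
def TangibleSSF : Prop := (fun t => eps R * t) '' tangible R = ghost R

/-- Nontriviality: `𝒢(R) ≠ {e}`. -/
def NontrivialG : Prop := ghost R ≠ {eps R}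

/-- `R` is discrete: `𝒢(R)` has a smallest element `> e`. -/
def DiscreteR : Prop :=
  ∃ c ∈ ghost R, glt (eps R) c ∧ ∀ d ∈ ghost R, glt (eps R) d → gle c d

/-- `R` is dense: `𝒢(R)` has no smallest element `> e`. -/
def DenseR : Prop := ¬ DiscreteR R

/-- `eR` is a semifield: `e ≠ 0`, `𝒢(R)` is closed under multiplication, and every
element of `𝒢(R)` is invertible in `eR` with respect to the identity `e`. -/
def GhostSemifield : Prop :=
  eps R ∈ ghost R ∧
    (∀ g ∈ ghost R, ∀ h ∈ ghost R, g * h ∈ ghost R) ∧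
    (∀ g ∈ ghost R, ∃ h ∈ ghost R, g * h = eps R)

end SSF

section Quad

variable {R : Type*} [CommSemiring R] {V : Type*} [AddCommMonoid V] [Module R V]

/-- `b` is a (symmetric bilinear) companion of the quadratic form `q`. -/
def IsCompanion (q : V → R) (b : V → V → R) : Prop :=
  (∀ x y, b x y = b y x) ∧
    (∀ x y z, b (x + y) z = b x z + b y z) ∧
    (∀ (a : R) (x y : V), b (a • x) y = a * b x y) ∧
    (∀ x y, q (x + y) = q x + q y + b x y)

/-- `(q, b)` is a quadratic pair on `V`. -/
def IsQuadPair (q : V → R) (b : V → V → R) : Prop :=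
  (∀ (a : R) (x : V), q (a • x) = a ^ 2 * q x) ∧ IsCompanion q b

/-- `q` is a quadratic form on `V`. -/
def IsQuadForm (q : V → R) : Prop := ∃ b, IsQuadPair q b

/-- `q` is quasilinear (i.e. additive) on the submodule `W`. -/
def QuasilinearOn (q : V → R) (W : Submodule R V) : Prop :=
  ∀ u ∈ W, ∀ v ∈ W, q (u + v) = q u + q v

/-- `x` is `q`-minimal: `q x' < q x` for every `x' < x` (in the minimal orderings). -/
def QMinimal (q : V → R) (x : V) : Prop := ∀ x' : V, mlt x' x → mlt (q x') (q x)

/-- The maximum of two elements of `R` with respect to the minimal ordering. -/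
noncomputable def rsup (a b : R) : R := if a = b then a else a + b

/-- The componentwise maximum `x ∨ y` (in the minimal ordering) of two vectors
of a free module. -/
noncomputable def vsup {ι : Type*} (bV : Module.Basis ι R V) (x y : V) : V :=
  bV.repr.symm (Finsupp.zipWith rsup (by simp [rsup]) (bV.repr x) (bV.repr y))

/-- The restriction `x(J)` of a vector to a subset `J` of the index set of the base. -/
noncomputable def restrict {ι : Type*} (bV : Module.Basis ι R V) (x : V) (J : Finset ι) : V :=
  ∑ i ∈ J, (bV.repr x) i • bV i

/-- The CS-ratio `CS(x,y) = e·b(x,y)² · (e·q(x)·q(y))⁻¹`, where `inv` is the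
inversion of the semifield `eR`. -/
noncomputable def CSratio (q : V → R) (b : V → V → R) (inv : R → R) (x y : V) : R :=
  eps R * (b x y) ^ 2 * inv (eps R * (q x * q y))

end Quad

section Aux

variable {R : Type*} [CommSemiring R]

lemma e_mul_e (hR : IsSupertropical R) : eps R * eps R = eps R := by
  have h : eps R * eps R = eps R + eps R := by unfold eps; ring
  rw [h, hR.1]

lemma eq_zero_of_e_mul (hR : IsSupertropical R) {a : R} (h : eps R * a = 0) : a = 0 := by
  have h2 := hR.2.2 a 0 (by simpa using h)
  simpa using h2

lemma zsf (hR : IsSupertropical R) {u v : R} (h : u + v = 0) : u = 0 := by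
  by_cases hc : eps R * u = eps R * v
  · have h3 := hR.2.2 u v hc
    rw [h] at h3
    have hv : v = 0 := eq_zero_of_e_mul hR h3.symm
    simpa [hv] using h
  · rcases hR.2.1 u v hc with h1 | h1
    · exact h1.symm.trans h
    · have hv : v = 0 := h1.symm.trans h
      simpa [hv] using h

lemma e_add_self (hR : IsSupertropical R) (s : R) :
    eps R * s + eps R * s = eps R * s := by
  have h := hR.2.2 (eps R * s) (eps R * s) rfl
  rw [h, ← mul_assoc, e_mul_e hR]

lemma gle_trans {a b c : R} (h1 : gle a b) (h2 : gle b c) : gle a c := by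
  unfold gle at *; rw [← h2, ← add_assoc, h1]

lemma gle_mul {a b : R} (h : gle a b) (c : R) : gle (a * c) (b * c) := by
  unfold gle at *; rw [← add_mul, h]

lemma gle_add {a b c d : R} (h1 : gle a b) (h2 : gle c d) : gle (a + c) (b + d) := by
  unfold gle at *; rw [add_add_add_comm, h1, h2]

lemma gle_add_both {a b c : R} (h1 : gle a c) (h2 : gle b c) : gle (a + b) c := by
  unfold gle at *; rw [add_assoc, h2, h1]

lemma gle_add_left {a b c : R} (h : gle a b) : gle a (c + b) := by
  unfold gle at *; rw [add_left_comm, h]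

lemma gle_add_right {a b c : R} (h : gle a b) : gle a (b + c) := by
  unfold gle at *; rw [← add_assoc, h]

lemma gle_self_add {a c : R} (h : a + a = a) : gle a (a + c) := by
  unfold gle; rw [← add_assoc, h]

lemma gle_total_e (hR : IsSupertropical R) (s t : R) :
    gle (eps R * s) (eps R * t) ∨ gle (eps R * t) (eps R * s) := by
  by_cases hc : eps R * s = eps R * t
  · left; unfold gle; rw [← hc, e_add_self hR]
  · have hc2 : eps R * (eps R * s) ≠ eps R * (eps R * t) := by
      rw [← mul_assoc, ← mul_assoc, e_mul_e hR]; exact hc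
    rcases hR.2.1 _ _ hc2 with h1 | h1
    · right; unfold gle; rw [add_comm]; exact h1
    · left; exact h1

lemma e_mul_ghost (hR : IsSupertropical R) {s : R} (hs : s ≠ 0) :
    eps R * s ∈ ghost R := by
  refine ⟨⟨s, rfl⟩, ?_⟩
  simp only [Set.mem_singleton_iff]
  exact fun h => hs (eq_zero_of_e_mul hR h)

lemma ghost_mul_ne (hR : IsSupertropical R) (hsf : GhostSemifield R) {s t : R}
    (hs : s ≠ 0) (ht : t ≠ 0) : eps R * (s * t) ∈ ghost R := by
  have h := hsf.2.1 _ (e_mul_ghost hR hs) _ (e_mul_ghost hR ht)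
  have he : eps R * s * (eps R * t) = eps R * (s * t) := by
    have h2 : eps R * s * (eps R * t) = eps R * eps R * (s * t) := by ring
    rw [h2, e_mul_e hR]
  rwa [he] at h

lemma mul_e_absorb (hR : IsSupertropical R) (s t : R) :
    eps R * s * t * eps R = eps R * s * t := by
  have h : eps R * s * t * eps R = eps R * eps R * (s * t) := by ring
  rw [h, e_mul_e hR, ← mul_assoc]

lemma main_ineq (hR : IsSupertropical R) (hsf : GhostSemifield R)
    (inv : R → R) (hinv : ∀ g ∈ ghost R, inv g ∈ ghost R ∧ g * inv g = eps R)
    {α β γ B : R} (p r : R) (hα : α ≠ 0) (hβ : β ≠ 0) (hγ : γ ≠ 0)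
    (hs : α + β + B ≠ 0) :
    gle (eps R * (p + r) ^ 2 * inv (eps R * ((α + β + B) * γ)))
      (eps R * p ^ 2 * inv (eps R * (α * γ)) +
        eps R * r ^ 2 * inv (eps R * (β * γ))) := by
  have hee : eps R + eps R = eps R := hR.1
  set Dx := eps R * (α * γ) with hDxdef
  set Dy := eps R * (β * γ) with hDydef
  set D := eps R * ((α + β + B) * γ) with hDdef
  obtain ⟨_, hIxE⟩ := hinv _ (ghost_mul_ne hR hsf hα hγ)
  obtain ⟨_, hIyE⟩ := hinv _ (ghost_mul_ne hR hsf hβ hγ)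
  obtain ⟨_, hIDE⟩ := hinv _ (ghost_mul_ne hR hsf hs hγ)
  -- e ≤ inv Dx * D
  have hBx : gle (eps R) (inv Dx * D) := by
    have hsplit : D = Dx + (eps R * (β * γ) + eps R * (B * γ)) := by
      rw [hDdef, hDxdef]; ring
    have h4 : inv Dx * D = eps R + inv Dx * (eps R * (β * γ) + eps R * (B * γ)) := by
      rw [hsplit, mul_add, mul_comm (inv Dx) Dx, hIxE]
    unfold gle; rw [h4, ← add_assoc, hee]
  have hBy : gle (eps R) (inv Dy * D) := by
    have hsplit : D = Dy + (eps R * (α * γ) + eps R * (B * γ)) := by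
      rw [hDdef, hDydef]; ring
    have h4 : inv Dy * D = eps R + inv Dy * (eps R * (α * γ) + eps R * (B * γ)) := by
      rw [hsplit, mul_add, mul_comm (inv Dy) Dy, hIyE]
    unfold gle; rw [h4, ← add_assoc, hee]
  -- e·p·r ≤ e·p² + e·r²
  have hA : gle (eps R * (p * r)) (eps R * p ^ 2 + eps R * r ^ 2) := by
    rcases gle_total_e hR p r with h | h
    · have h2 := gle_mul h r
      have h3 : gle (eps R * (p * r)) (eps R * r ^ 2) := by
        unfold gle at h2 ⊢
        rw [show eps R * (p * r) = eps R * p * r from by ring,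
          show eps R * r ^ 2 = eps R * r * r from by ring]
        exact h2
      exact gle_add_left h3
    · have h2 := gle_mul h p
      have h3 : gle (eps R * (p * r)) (eps R * p ^ 2) := by
        unfold gle at h2 ⊢
        rw [show eps R * (p * r) = eps R * r * p from by ring,
          show eps R * p ^ 2 = eps R * p * p from by ring]
        exact h2
      exact gle_add_right h3
  -- numerator inequality
  have hexp : eps R * (p + r) ^ 2
      = eps R * p ^ 2 + eps R * (p * r) + eps R * r ^ 2 := by
    have h5 : eps R * (p + r) ^ 2
        = eps R * p ^ 2 + (eps R + eps R) * (p * r) + eps R * r ^ 2 := by ring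
    rw [h5, hee]
  have step1 : gle (eps R * (p + r) ^ 2) (eps R * p ^ 2 + eps R * r ^ 2) := by
    rw [hexp]
    refine gle_add_both (gle_add_both ?_ hA) ?_
    · exact gle_self_add (e_add_self hR (p ^ 2))
    · exact gle_add_left (e_add_self hR (r ^ 2))
  -- lift to the full terms
  have h5x : gle (eps R * p ^ 2) (eps R * p ^ 2 * inv Dx * D) := by
    have h6 := gle_mul hBx (eps R * p ^ 2)
    unfold gle at h6 ⊢
    rw [show eps R * (eps R * p ^ 2) = eps R * p ^ 2 from by
        rw [← mul_assoc, e_mul_e hR],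
      show inv Dx * D * (eps R * p ^ 2) = eps R * p ^ 2 * inv Dx * D from by ring] at h6
    exact h6
  have h5y : gle (eps R * r ^ 2) (eps R * r ^ 2 * inv Dy * D) := by
    have h6 := gle_mul hBy (eps R * r ^ 2)
    unfold gle at h6 ⊢
    rw [show eps R * (eps R * r ^ 2) = eps R * r ^ 2 from by
        rw [← mul_assoc, e_mul_e hR],
      show inv Dy * D * (eps R * r ^ 2) = eps R * r ^ 2 * inv Dy * D from by ring] at h6
    exact h6
  have step3 := gle_trans step1 (gle_add h5x h5y)
  have step4 := gle_mul step3 (inv D)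
  have hsimpx : eps R * p ^ 2 * inv Dx * D * inv D = eps R * p ^ 2 * inv Dx := by
    rw [mul_assoc (eps R * p ^ 2 * inv Dx) D (inv D), hIDE, mul_e_absorb hR]
  have hsimpy : eps R * r ^ 2 * inv Dy * D * inv D = eps R * r ^ 2 * inv Dy := by
    rw [mul_assoc (eps R * r ^ 2 * inv Dy) D (inv D), hIDE, mul_e_absorb hR]
  rwa [add_mul, hsimpx, hsimpy] at step4

end Aux

/-- subadditivity of the CS-ratio: `CS(x+y, w) ≤ CS(x,w) + CS(y,w)`
(and `x + y` is anisotropic). -/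
theorem stmt7 {R : Type*} [CommSemiring R] (hR : IsSupertropical R)
    (hsf : GhostSemifield R) (hnt : NontrivialG R)
    (inv : R → R) (hinv : ∀ g ∈ ghost R, inv g ∈ ghost R ∧ g * inv g = eps R)
    {V : Type*} [AddCommMonoid V] [Module R V] (q : V → R) (b : V → V → R)
    (hqb : IsQuadPair q b) (x y w : V)
    (hx : q x ≠ 0) (hy : q y ≠ 0) (hw : q w ≠ 0) :
    q (x + y) ≠ 0 ∧
    gle (CSratio q b inv (x + y) w) (CSratio q b inv x w + CSratio q b inv y w) := by
  obtain ⟨hpow, hbsymm, hbadd, hbsmul, hqadd⟩ := hqb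
  have hxy : q (x + y) ≠ 0 := by
    rw [hqadd x y]
    intro h0
    exact hx (zsf hR (zsf hR h0))
  refine ⟨hxy, ?_⟩
  have hs : q x + q y + b x y ≠ 0 := by rw [← hqadd x y]; exact hxy
  simp only [CSratio]
  rw [hbadd x y w, hqadd x y]
  exact main_ineq hR hsf inv hinv (b x w) (b y w) hx hy hw hs

end Supertrop
end

section
/- Let R be a supertropical semiring, V a free R-module with base (ε_i)_{i∈I}, and q a quadratic form on V. If x ∈ V \ {0} is q-minimal, then |supp(x)| ≤ 2 if q(x) ∈ 𝒯(R), and |supp(x)| ≤ 4 if q(x) ∈ 𝒢(R). -/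
open scoped Classical

namespace Supertrop

section Aux

variable {R : Type*} [CommSemiring R]

lemma eps_mul (x : R) : eps R * x = x + x := by rw [eps, add_mul, one_mul]

lemma eps_idem (hR : IsSupertropical R) (a : R) : eps R * (eps R * a) = eps R * a := by
  rw [eps_mul (eps R * a), ← add_mul, hR.1]

lemma add_trichotomy (hR : IsSupertropical R) (a w : R) :
    a + w = a ∨ a + w = w ∨ a + w = eps R * w := by
  by_cases h : eps R * a = eps R * w
  · exact Or.inr (Or.inr (hR.2.2 a w h))
  · rcases hR.2.1 a w h with h1 | h1
    · exact Or.inl h1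
    · exact Or.inr (Or.inl h1)

lemma three_sum (hR : IsSupertropical R) (u v w : R) :
    u + v + w = u + v ∨ u + v + w = u + w ∨ u + v + w = v + w := by
  by_cases hvw : eps R * v = eps R * w
  · have hvw' : v + w = eps R * w := hR.2.2 v w hvw
    by_cases huw : eps R * u = eps R * w
    · refine Or.inr (Or.inr ?_)
      have huv : u + v = eps R * v := hR.2.2 u v (by rw [hvw, huw])
      have hew : eps R * w + w = eps R * w :=
        hR.2.2 (eps R * w) w (by rw [eps_idem hR])
      calc u + v + w = eps R * v + w := by rw [huv]
        _ = eps R * w + w := by rw [hvw]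
        _ = eps R * w := hew
        _ = v + w := hvw'.symm
    · have h2 : eps R * u ≠ eps R * (eps R * w) := by rw [eps_idem hR]; exact huw
      rcases hR.2.1 u (eps R * w) h2 with h3 | h3
      · rcases hR.2.1 u w huw with h4 | h4
        · exact Or.inr (Or.inl (by rw [add_assoc, hvw', h3, h4]))
        · exfalso
          apply huw
          have s1 : u + v + w = u := by rw [add_assoc, hvw', h3]
          have s2 : u + v + w = eps R * w := by
            rw [add_comm u v, add_assoc, h4, hvw']
          have : u = eps R * w := by rw [← s1, s2]
          rw [this, eps_idem hR]
      · exact Or.inr (Or.inr (by rw [add_assoc, hvw', h3]))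
  · rcases hR.2.1 v w hvw with h1 | h1
    · exact Or.inl (by rw [add_assoc, h1])
    · exact Or.inr (Or.inl (by rw [add_assoc, h1]))

lemma mle_antisymm (hR : IsSupertropical R) {a b : R} (h1 : mle a b) (h2 : mle b a) :
    a = b := by
  obtain ⟨z, hz⟩ := h1
  obtain ⟨w, hw⟩ := h2
  have sa : eps R * a + eps R * a = eps R * a := by rw [← add_mul, hR.1]
  have sb : eps R * b + eps R * b = eps R * b := by rw [← add_mul, hR.1]
  have e1 : eps R * a + eps R * z = eps R * b := by rw [← mul_add, hz]
  have e2 : eps R * b + eps R * w = eps R * a := by rw [← mul_add, hw]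
  have h3 : eps R * a + eps R * b = eps R * b := by
    conv_lhs => rw [← e1]
    rw [← add_assoc, sa, e1]
  have h4 : eps R * b + eps R * a = eps R * a := by
    conv_lhs => rw [← e2]
    rw [← add_assoc, sb, e2]
  have eab : eps R * a = eps R * b := by rw [← h4, add_comm, h3]
  by_cases hz2 : eps R * z = eps R * a
  · have hb' : b = eps R * a := by rw [← hz, hR.2.2 a z hz2.symm, hz2]
    by_cases hw2 : eps R * w = eps R * b
    · have ha' : a = eps R * w := by rw [← hw, hR.2.2 b w hw2.symm]
      rw [ha', hw2, hb', eps_idem hR]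
    · rcases hR.2.1 b w (fun h => hw2 h.symm) with h | h
      · rw [← hw, h]
      · exfalso
        apply hw2
        have haw : a = w := by rw [← hw, h]
        rw [← haw, eab]
  · rcases hR.2.1 a z (fun h => hz2 h.symm) with h | h
    · rw [← hz, h]
    · exfalso
      apply hz2
      have hbz : b = z := by rw [← hz, h]
      rw [← hbz, ← eab]

lemma sub_mle {γ : Type*} {J K : Finset γ} (h : J ⊆ K) (f : γ → R) :
    mle (∑ p ∈ J, f p) (∑ p ∈ K, f p) :=
  ⟨∑ p ∈ K \ J, f p, by rw [← Finset.sum_union Finset.disjoint_sdiff,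
    Finset.union_sdiff_of_subset h]⟩

lemma two_subsum (hR : IsSupertropical R) {γ : Type*} (K : Finset γ) (f : γ → R) :
    ∃ J ⊆ K, J.card ≤ 2 ∧ ∑ p ∈ J, f p = ∑ p ∈ K, f p := by
  induction K using Finset.cons_induction with
  | empty => exact ⟨∅, Finset.Subset.refl _, by simp⟩
  | cons a K ha ih =>
    obtain ⟨J, hJK, hcard, hsum⟩ := ih
    rw [Finset.sum_cons, ← hsum]
    by_cases h1 : J.card ≤ 1
    · refine ⟨insert a J, ?_, ?_, ?_⟩
      · exact Finset.insert_subset (Finset.mem_cons_self a K) (hJK.trans (Finset.subset_cons ha))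
      · exact (Finset.card_insert_le a J).trans (by omega)
      · rw [Finset.sum_insert (fun hmem => ha (hJK hmem))]
    · have h2 : J.card = 2 := by omega
      obtain ⟨k₁, k₂, hk12, rfl⟩ := Finset.card_eq_two.mp h2
      have hk₁ : k₁ ∈ K := hJK (by simp)
      have hk₂ : k₂ ∈ K := hJK (by simp)
      have hak₁ : a ≠ k₁ := fun h => ha (h ▸ hk₁)
      have hak₂ : a ≠ k₂ := fun h => ha (h ▸ hk₂)
      rw [Finset.sum_pair hk12, ← add_assoc]
      rcases three_sum hR (f a) (f k₁) (f k₂) with h | h | h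
      · exact ⟨{a, k₁}, Finset.insert_subset (Finset.mem_cons_self a K)
          (by simp [Finset.mem_cons, hk₁]), by simp [hak₁],
          by rw [Finset.sum_pair hak₁, h]⟩
      · exact ⟨{a, k₂}, Finset.insert_subset (Finset.mem_cons_self a K)
          (by simp [Finset.mem_cons, hk₂]), by simp [hak₂],
          by rw [Finset.sum_pair hak₂, h]⟩
      · exact ⟨{k₁, k₂}, (by intro t ht; exact (Finset.subset_cons ha) (hJK ht)), by simp [hk12],
          by rw [Finset.sum_pair hk12, h]⟩

end Aux

section Main

variable {R : Type*} [CommSemiring R] {V : Type*} [AddCommMonoid V] [Module R V]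

lemma q_zero {q : V → R} (hq2 : ∀ (a : R) (x : V), q (a • x) = a ^ 2 * q x) : q 0 = 0 := by
  have h := hq2 0 0
  rw [zero_smul] at h
  rw [h]
  ring

lemma b_zero_left {q : V → R} {b : V → V → R} (hb : IsCompanion q b) (w : V) : b 0 w = 0 := by
  have h := hb.2.2.1 0 w w
  rwa [zero_smul, zero_mul] at h

lemma b_sum_left {q : V → R} {b : V → V → R} (hb : IsCompanion q b)
    {ι : Type*} (v : ι → V) (J : Finset ι) (w : V) :
    b (∑ i ∈ J, v i) w = ∑ i ∈ J, b (v i) w := by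
  induction J using Finset.cons_induction with
  | empty => simpa using b_zero_left hb w
  | cons a J ha ih => rw [Finset.sum_cons, Finset.sum_cons, hb.2.1, ih]

lemma expand {q : V → R} {b : V → V → R}
    (hq2 : ∀ (a : R) (x : V), q (a • x) = a ^ 2 * q x) (hb : IsCompanion q b)
    {ι : Type*} (v : ι → V) (F : Sym2 ι → R)
    (hFd : ∀ i, F s(i, i) = q (v i)) (hFo : ∀ i j, i ≠ j → F s(i, j) = b (v i) (v j)) :
    ∀ J : Finset ι, q (∑ i ∈ J, v i) = ∑ p ∈ J.sym2, F p := by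
  intro J
  induction J using Finset.cons_induction with
  | empty => simpa using q_zero hq2
  | cons a J ha ih =>
    rw [Finset.sum_cons, hb.2.2.2, ih, Finset.sym2_cons, Finset.sum_disjUnion, Finset.sum_map]
    simp only [Sym2.mkEmbedding_apply]
    rw [Finset.sum_cons, hFd a]
    rw [Finset.sum_congr rfl (fun i (hi : i ∈ J) => hFo a i (fun h => ha (h ▸ hi)))]
    have hbs : b (v a) (∑ i ∈ J, v i) = ∑ i ∈ J, b (v a) (v i) := by
      rw [hb.1, b_sum_left hb]
      exact Finset.sum_congr rfl (fun i _ => hb.1 (v i) (v a))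
    rw [hbs]
    ring

end Main

/-- a `q`-minimal vector has support of size at most `2` if `q(x)` is
tangible, and at most `4` if `q(x)` is ghost. -/
theorem stmt11 {R : Type*} [CommSemiring R] (hR : IsSupertropical R)
    {V : Type*} [AddCommMonoid V] [Module R V] {ι : Type*} (bV : Module.Basis ι R V)
    (q : V → R) (hq : IsQuadForm q) (x : V) (hx : x ≠ 0) (hmin : QMinimal q x) :
    (q x ∈ tangible R → (bV.repr x).support.card ≤ 2) ∧
    (q x ∈ ghost R → (bV.repr x).support.card ≤ 4) := by
  obtain ⟨b, hq2, hb⟩ := hq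
  set S := (bV.repr x).support with hS
  set v : ι → V := fun i => bV.repr x i • bV i with hv
  set F : Sym2 ι → R := Sym2.lift ⟨fun i j => if i = j then q (v i) else b (v i) (v j), by
    intro i j
    dsimp only
    by_cases h : i = j
    · subst h; rfl
    · rw [if_neg h, if_neg (Ne.symm h), hb.1]⟩ with hF
  have hFd : ∀ i, F s(i, i) = q (v i) := fun i => by simp [hF]
  have hFo : ∀ i j, i ≠ j → F s(i, j) = b (v i) (v j) := fun i j h => by
    simp [hF, Sym2.lift_mk, h]
  have hexp := expand hq2 hb v F hFd hFo
  have hxS : ∑ i ∈ S, v i = x := by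
    conv_rhs => rw [← bV.linearCombination_repr x]
    rw [Finsupp.linearCombination_apply, Finsupp.sum]
  set idx : Sym2 ι → Finset ι := Sym2.lift ⟨fun i j => {i, j}, fun i j => by
    dsimp only
    rw [Finset.pair_comm]⟩ with hidx
  have hidx_card : ∀ p : Sym2 ι, (idx p).card ≤ 2 := by
    intro p
    induction p using Sym2.ind with
    | _ i j =>
      simp only [hidx, Sym2.lift_mk]
      exact (Finset.card_insert_le i {j}).trans (by simp)
  have key : ∀ J₂ : Finset (Sym2 ι), J₂ ⊆ S.sym2 → ∑ p ∈ J₂, F p = q x →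
      S.card ≤ 2 * J₂.card := by
    intro J₂ hsub hsum
    set J : Finset ι := J₂.biUnion idx with hJ
    have hJS : J ⊆ S := by
      intro t ht
      rw [Finset.mem_biUnion] at ht
      obtain ⟨p, hp, htp⟩ := ht
      have hmem := Finset.mem_sym2_iff.mp (hsub hp)
      revert htp
      induction p using Sym2.ind with
      | _ i j =>
        intro htp
        simp only [hidx, Sym2.lift_mk, Finset.mem_insert, Finset.mem_singleton] at htp
        rcases htp with rfl | rfl
        · exact hmem t (by simp)
        · exact hmem t (by simp)
    have hSJ : S ⊆ J := by
      by_contra hc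
      obtain ⟨k, hkS, hkJ⟩ := Finset.not_subset.mp hc
      set x' := ∑ i ∈ J, v i with hx'
      have hle : mle x' x := ⟨∑ i ∈ S \ J, v i, by
        rw [← Finset.sum_union Finset.disjoint_sdiff, Finset.union_sdiff_of_subset hJS, hxS]⟩
      have hne : x' ≠ x := by
        intro h
        have h0 : bV.repr x' k = 0 := by
          rw [hx', map_sum, Finset.sum_apply']
          refine Finset.sum_eq_zero (fun i hi => ?_)
          have hik : i ≠ k := fun he => hkJ (he ▸ hi)
          simp [hv, Module.Basis.repr_self, Finsupp.single_apply, hik]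
        rw [h] at h0
        exact Finsupp.mem_support_iff.mp hkS h0
      have hmlt := hmin x' ⟨hle, hne⟩
      apply hmlt.2
      have hsub2 : J₂ ⊆ J.sym2 := by
        intro p hp
        rw [Finset.mem_sym2_iff]
        intro t ht
        rw [hJ, Finset.mem_biUnion]
        refine ⟨p, hp, ?_⟩
        revert ht
        induction p using Sym2.ind with
        | _ i j =>
          intro ht
          rw [Sym2.mem_iff] at ht
          simp only [hidx, Sym2.lift_mk, Finset.mem_insert, Finset.mem_singleton]
          exact ht
      have h1 : mle (q x) (q x') := by
        rw [hexp J, ← hsum]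
        exact sub_mle hsub2 F
      have h2 : mle (q x') (q x) := by
        obtain ⟨z, hz⟩ := hle
        exact ⟨q z + b x' z, by rw [← add_assoc, ← hb.2.2.2, hz]⟩
      exact mle_antisymm hR h2 h1
    calc S.card ≤ J.card := Finset.card_le_card hSJ
      _ ≤ ∑ p ∈ J₂, (idx p).card := Finset.card_biUnion_le
      _ ≤ ∑ p ∈ J₂, 2 := Finset.sum_le_sum (fun p _ => hidx_card p)
      _ = 2 * J₂.card := by rw [Finset.sum_const, smul_eq_mul, mul_comm]
  have hqx : ∑ p ∈ S.sym2, F p = q x := by rw [← hexp S, hxS]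
  obtain ⟨J₂, hJsub, hJcard, hJsum⟩ := two_subsum hR S.sym2 F
  rw [hqx] at hJsum
  constructor
  · intro htan
    by_cases h1 : J₂.card ≤ 1
    · have := key J₂ hJsub hJsum
      omega
    · have h2 : J₂.card = 2 := by omega
      obtain ⟨p₁, p₂, hp12, rfl⟩ := Finset.card_eq_two.mp h2
      rw [Finset.sum_pair hp12] at hJsum
      rcases add_trichotomy hR (F p₁) (F p₂) with h | h | h
      · have hs1 : ∑ p ∈ {p₁}, F p = q x := by rw [Finset.sum_singleton, ← hJsum, h]
        have := key {p₁} (fun t ht => hJsub (by simp at ht; simp [ht])) hs1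
        simpa using this
      · have hs1 : ∑ p ∈ {p₂}, F p = q x := by rw [Finset.sum_singleton, ← hJsum, h]
        have := key {p₂} (fun t ht => hJsub (by simp at ht; simp [ht])) hs1
        simpa using this
      · exact absurd ⟨F p₂, by show eps R * F p₂ = q x; rw [← h, hJsum]⟩ htan
  · intro _
    have := key J₂ hJsub hJsum
    omega


end Supertrop
end
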